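/- arXiv:0802.0165 — 4 statements merged into one kernel-verified Lean document; each statement's English description precedes it below -/
import Mathlib

section
/- Let E be an elliptic curve given by a Weierstrass equation Y²Z + a₁XYZ + a₃YZ² = X³ + a₂X²Z + a₄XZ² + a₆Z³ over a field K, and for distinct points A, B let u_{A,B} be the function with polar divisor -[A]-[B] defined as u_{A,B} = (y_A - y(A-B))/(x_A - x(A-B)), where x_A, y_A denote the coordinate functions composed with translation by -A. Then u_{B,A} = -u_{A,B} - a₁. -/
set_option maxHeartbeats 1000000

noncomputable section
namespace EllipticPeriods

variable {F : Type*} [Field F]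

/-- x-coordinate of an affine point, with junk value 0 at the point at infinity. -/
def xc {W : WeierstrassCurve.Affine F} : W.Point → F
  | .zero => 0
  | @WeierstrassCurve.Affine.Point.some _ _ _ x _ _ => x

/-- y-coordinate of an affine point, with junk value 0 at the point at infinity. -/
def yc {W : WeierstrassCurve.Affine F} : W.Point → F
  | .zero => 0
  | @WeierstrassCurve.Affine.Point.some _ _ _ _ y _ => y

open Classical in
/-- The function `u_{A,B} = (y_A - y(A-B))/(x_A - x(A-B))`, evaluated at `P`: this is the
slope of the line (secant, or tangent in the degenerate case) through the points
`P - A` and `A - B` of the curve. -/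
def uf (W : WeierstrassCurve.Affine F) (A B P : W.Point) : F :=
  W.slope (xc (P - A)) (xc (A - B)) (yc (P - A)) (yc (A - B))

/-- `Γ(A,B,C) = u_{A,B}(C)`. -/
def Gam (W : WeierstrassCurve.Affine F) (A B C : W.Point) : F := uf W A B C

open WeierstrassCurve.Affine in
lemma some_eq_some {W : WeierstrassCurve.Affine F} {x y x' y' : F}
    (h : W.Nonsingular x y) (h' : W.Nonsingular x' y') (hx : x = x') (hy : y = y') :
    Point.some _ _ h = Point.some _ _ h' := by subst hx; subst hy; rfl

open Classical in
open WeierstrassCurve.Affine in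
lemma slope_key (W : WeierstrassCurve.Affine F) {x₁ y₁ x₂ y₂ : F}
    (h₁ : W.Nonsingular x₁ y₁) (h₂ : W.Nonsingular x₂ y₂)
    (hQ : Point.some _ _ h₁ ≠ (0 : W.Point))
    (hxy : x₁ = x₂ → y₁ ≠ W.negY x₂ y₂) :
    W.slope (W.addX x₁ x₂ (W.slope x₁ x₂ y₁ y₂)) x₂
      (W.addY x₁ x₂ y₁ (W.slope x₁ x₂ y₁ y₂)) (W.negY x₂ y₂)
    = -(W.slope x₁ x₂ y₁ y₂) - W.a₁ := by
  set L := W.slope x₁ x₂ y₁ y₂ with hLdef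
  have e₁ : W.Equation x₁ y₁ := h₁.1
  have e₂ : W.Equation x₂ y₂ := h₂.1
  have hL : y₁ - y₂ = L * (x₁ - x₂) := by
    by_cases hx : x₁ = x₂
    · have hy : y₁ = y₂ := Y_eq_of_Y_ne e₁ e₂ hx (hxy hx)
      rw [hx, hy, sub_self, sub_self, mul_zero]
    · rw [hLdef, slope_of_X_ne hx, div_mul_cancel₀ _ (sub_ne_zero.mpr hx)]
  rw [equation_iff] at e₁ e₂
  by_cases hx2 : W.addX x₁ x₂ L = x₂
  · -- x(Q+R) = x(R)
    have heq := Y_eq_of_X_eq (equation_add h₁.1 h₂.1 (fun h => hxy h.1 h.2)) h₂.1 hx2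
    simp only [← hLdef] at heq
    rcases heq with hy2 | hy2
    · -- Q + R = R, contradiction with Q ≠ 0
      exact absurd (add_right_cancel (a := Point.some _ _ h₁) (b := Point.some _ _ h₂) (c := 0)
        (by rw [Point.add_some (fun h => hxy h.1 h.2), zero_add]; exact some_eq_some _ _ hx2 hy2)) hQ
    · -- Q + R = -R : tangent case
      have hyy : W.negY x₂ y₂ ≠ y₂ := by
        intro hyy
        exact absurd (add_right_cancel (a := Point.some _ _ h₁) (b := Point.some _ _ h₂) (c := 0)
          (by rw [Point.add_some (fun h => hxy h.1 h.2), zero_add]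
              exact some_eq_some _ _ hx2 (hy2.trans hyy))) hQ
      have hy2' : W.addY x₁ x₂ y₁ L ≠ W.negY x₂ (W.negY x₂ y₂) := by
        rw [negY_negY, hy2]; exact hyy
      rw [slope_of_Y_ne hx2 hy2']
      have hd : W.addY x₁ x₂ y₁ L
          - W.negY (W.addX x₁ x₂ L) (W.addY x₁ x₂ y₁ L) ≠ 0 := by
        rw [sub_ne_zero, hx2, hy2, negY_negY]
        exact hyy
      rw [div_eq_iff hd, hx2, hy2, negY_negY]
      by_cases hx : x₁ = x₂
      · -- Q = R : both slopes are the tangent slope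
        have hy : y₁ = y₂ := Y_eq_of_Y_ne h₁.1 h₂.1 hx (hxy hx)
        subst hx; subst hy
        have hden : y₁ - W.negY x₁ y₁ ≠ 0 := sub_ne_zero.mpr (hxy rfl)
        rw [hLdef, slope_of_Y_ne rfl (hxy rfl)]
        simp only [negY] at hden ⊢
        rw [show (-y₁ - W.a₁ * x₁ - W.a₃ - y₁) = -(y₁ - (-y₁ - W.a₁ * x₁ - W.a₃)) by ring,
          mul_neg, sub_mul, neg_mul, div_mul_cancel₀ _ hden]
        ring
      · apply mul_right_cancel₀ (sub_ne_zero.mpr hx)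
        have hy₁ : y₁ = y₂ + L * (x₁ - x₂) := by linear_combination hL
        rw [hy₁] at e₁
        simp only [addX] at hx2
        simp only [negY]
        linear_combination e₂ - e₁ + (x₁ - x₂) ^ 2 * hx2
  · rw [slope_of_X_ne hx2, div_eq_iff (sub_ne_zero.mpr hx2)]
    simp only [addY, negAddY, addX, negY]
    linear_combination -hL

open Classical in
open WeierstrassCurve.Affine in
lemma slope_key_pt (W : WeierstrassCurve.Affine F) (Q R : W.Point)
    (hQ : Q ≠ 0) (hR : R ≠ 0) (hQR : Q + R ≠ 0) :
    W.slope (xc (Q + R)) (xc (-R)) (yc (Q + R)) (yc (-R))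
      = -(W.slope (xc Q) (xc R) (yc Q) (yc R)) - W.a₁ := by
  rcases Q with _ | @⟨x₁, y₁, h₁⟩
  · exact absurd rfl hQ
  rcases R with _ | @⟨x₂, y₂, h₂⟩
  · exact absurd rfl hR
  have hxy : x₁ = x₂ → y₁ ≠ W.negY x₂ y₂ := fun hx hy => hQR (Point.add_of_Y_eq hx hy)
  rw [Point.add_some (fun h => hxy h.1 h.2), Point.neg_some]
  exact slope_key W h₁ h₂ (Point.some_ne_zero h₁) hxy

/-- `u_{B,A} = -u_{A,B} - a₁`, as functions on `E` (i.e. at every point `P`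
away from the poles `A`, `B`). -/
theorem u_swap {F : Type*} [Field F] (W : WeierstrassCurve.Affine F)
    (A B : W.Point) (hAB : A ≠ B) (P : W.Point) (hPA : P ≠ A) (hPB : P ≠ B) :
    uf W B A P = -uf W A B P - W.a₁ := by
  classical
  show W.slope (xc (P - B)) (xc (B - A)) (yc (P - B)) (yc (B - A))
      = -(W.slope (xc (P - A)) (xc (A - B)) (yc (P - A)) (yc (A - B))) - W.a₁
  have h1 : P - B = (P - A) + (A - B) := (sub_add_sub_cancel P A B).symm
  have h2 : B - A = -(A - B) := (neg_sub A B).symm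
  rw [h1, h2]
  exact slope_key_pt W (P - A) (A - B) (sub_ne_zero.mpr hPA) (sub_ne_zero.mpr hAB)
    (by rw [← h1]; exact sub_ne_zero.mpr hPB)

end EllipticPeriods
end
end

section
/- For pairwise distinct points A, B, C on an elliptic curve E, the quantity Γ(A,B,C) = u_{A,B}(C) satisfies the symmetry relations Γ(A,B,C) = u_{B,C}(A) = u_{C,A}(B) = -u_{B,A}(C) - a₁. -/
noncomputable section
namespace EllipticPeriods

variable {F : Type*} [Field F]

open WeierstrassCurve.Affine WeierstrassCurve.Affine.Point
open Classical

@[simp] lemma xc_some {W : WeierstrassCurve.Affine F} {x y : F} (h : W.Nonsingular x y) :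
    xc (some _ _ h) = x := rfl

@[simp] lemma yc_some {W : WeierstrassCurve.Affine F} {x y : F} (h : W.Nonsingular x y) :
    yc (some _ _ h) = y := rfl

lemma some_eq_some_s2 {W : WeierstrassCurve.Affine F} {x₁ y₁ x₂ y₂ : F}
    (h₁ : W.Nonsingular x₁ y₁) (h₂ : W.Nonsingular x₂ y₂) (hx : x₁ = x₂) (hy : y₁ = y₂) :
    some _ _ h₁ = some _ _ h₂ := by subst hx; subst hy; rfl

/-- The slope of the line through two points of the curve. -/
def sl (W : WeierstrassCurve.Affine F) (P Q : W.Point) : F :=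
  W.slope (xc P) (xc Q) (yc P) (yc Q)

lemma slope_comm' {W : WeierstrassCurve.Affine F} {x₁ x₂ y₁ y₂ : F}
    (h₁ : W.Equation x₁ y₁) (h₂ : W.Equation x₂ y₂)
    (hxy : x₁ = x₂ → y₁ ≠ W.negY x₂ y₂) :
    W.slope x₂ x₁ y₂ y₁ = W.slope x₁ x₂ y₁ y₂ := by
  by_cases hx : x₁ = x₂
  · have hy := Y_eq_of_Y_ne h₁ h₂ hx (hxy hx)
    subst hx; subst hy; rfl
  · rw [slope_of_X_ne hx, slope_of_X_ne (Ne.symm hx), ← neg_sub y₁, ← neg_sub x₁, neg_div_neg_eq]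

lemma slope_neg' {W : WeierstrassCurve.Affine F} {x₁ x₂ y₁ y₂ : F}
    (h₁ : W.Equation x₁ y₁) (h₂ : W.Equation x₂ y₂)
    (hxy : x₁ = x₂ → y₁ ≠ W.negY x₂ y₂) :
    W.slope x₁ x₂ (W.negY x₁ y₁) (W.negY x₂ y₂) = -W.slope x₁ x₂ y₁ y₂ - W.a₁ := by
  by_cases hx : x₁ = x₂
  · have hy := Y_eq_of_Y_ne h₁ h₂ hx (hxy hx)
    subst hx; subst hy
    have hy' : y₁ ≠ W.negY x₁ y₁ := hxy rfl
    have hy'' : W.negY x₁ y₁ ≠ W.negY x₁ (W.negY x₁ y₁) := by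
      rw [W.negY_negY]; exact fun h => hy' h.symm
    rw [slope_of_Y_ne rfl hy'', slope_of_Y_ne rfl hy', W.negY_negY]
    have hd : y₁ - W.negY x₁ y₁ ≠ 0 := sub_ne_zero.mpr hy'
    have hd2 : W.negY x₁ y₁ - y₁ ≠ 0 := fun h => hd (by linear_combination -h)
    have e : W.negY x₁ y₁ - y₁ = -(y₁ - W.negY x₁ y₁) := by ring
    have hi : (y₁ - W.negY x₁ y₁) * (y₁ - W.negY x₁ y₁)⁻¹ = 1 := mul_inv_cancel₀ hd
    rw [e, div_neg, div_eq_mul_inv, div_eq_mul_inv]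
    simp only [negY] at hi ⊢
    linear_combination (-W.a₁) * hi
  · rw [slope_of_X_ne hx, slope_of_X_ne hx]
    have hd : x₁ - x₂ ≠ 0 := sub_ne_zero.mpr hx
    simp only [negY]
    field_simp
    ring

lemma slope_cyclic {W : WeierstrassCurve.Affine F} {x₁ x₂ y₁ y₂ : F}
    (h₁ : W.Equation x₁ y₁) (h₂ : W.Equation x₂ y₂)
    (hxy : x₁ = x₂ → y₁ ≠ W.negY x₂ y₂)
    (hne : ¬(x₂ = W.addX x₁ x₂ (W.slope x₁ x₂ y₁ y₂) ∧
      y₂ = W.negY (W.addX x₁ x₂ (W.slope x₁ x₂ y₁ y₂))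
        (W.negAddY x₁ x₂ y₁ (W.slope x₁ x₂ y₁ y₂)))) :
    W.slope x₂ (W.addX x₁ x₂ (W.slope x₁ x₂ y₁ y₂)) y₂
      (W.negAddY x₁ x₂ y₁ (W.slope x₁ x₂ y₁ y₂)) = W.slope x₁ x₂ y₁ y₂ := by
  have hF0 : y₂ - y₁ = W.slope x₁ x₂ y₁ y₂ * (x₂ - x₁) := by
    by_cases hx : x₁ = x₂
    · have hy := Y_eq_of_Y_ne h₁ h₂ hx (hxy hx)
      rw [hx, hy]; ring
    · rw [slope_of_X_ne hx]
      field_simp [sub_ne_zero.mpr hx]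
      ring
  by_cases hx23 : x₂ = W.addX x₁ x₂ (W.slope x₁ x₂ y₁ y₂)
  · have hE3 := W.equation_negAdd h₁ h₂ (fun h => hxy h.1 h.2)
    have hyc := W.Y_eq_of_X_eq h₂ hE3 hx23
    have hne' : y₂ ≠ W.negY (W.addX x₁ x₂ (W.slope x₁ x₂ y₁ y₂))
        (W.negAddY x₁ x₂ y₁ (W.slope x₁ x₂ y₁ y₂)) := fun h => hne ⟨hx23, h⟩
    have hy23 : y₂ = W.negAddY x₁ x₂ y₁ (W.slope x₁ x₂ y₁ y₂) := hyc.resolve_right hne'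
    rw [slope_of_Y_ne hx23 hne']
    by_cases hx : x₁ = x₂
    · have hy := Y_eq_of_Y_ne h₁ h₂ hx (hxy hx)
      rw [slope_of_Y_ne hx (hxy hx), ← hx, ← hy]
    · rw [slope_of_X_ne hx]
      have hd : x₁ - x₂ ≠ 0 := sub_ne_zero.mpr hx
      have hC : x₂ = W.addX x₁ x₂ ((y₁ - y₂) / (x₁ - x₂)) := by
        rwa [slope_of_X_ne hx] at hx23
      have hd2 : y₂ - W.negY x₂ y₂ ≠ 0 := by
        intro h
        apply hne'
        rw [← hy23, ← hx23]
        rw [sub_eq_zero] at h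
        exact h
      have he₁ := (W.equation_iff x₁ y₁).mp h₁
      have he₂ := (W.equation_iff x₂ y₂).mp h₂
      simp only [addX] at hC
      field_simp at hC
      have hC' : (y₁ - y₂) ^ 2 + W.a₁ * ((y₁ - y₂) * (x₁ - x₂)) =
          (W.a₂ + x₁ + 2 * x₂) * (x₁ - x₂) ^ 2 :=
        mul_left_cancel₀ hd (by linear_combination -(x₁ - x₂) * hC)
      rw [div_eq_div_iff hd2 hd]
      simp only [negY]
      linear_combination he₂ - he₁ + hC'
  · rw [slope_of_X_ne hx23, div_eq_iff (sub_ne_zero.mpr hx23)]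
    simp only [negAddY]
    linear_combination hF0

lemma sl_cyclic (W : WeierstrassCurve.Affine F) (P Q : W.Point)
    (hP : P ≠ 0) (hQ : Q ≠ 0) (hPQ : P + Q ≠ 0) :
    sl W Q (-(P + Q)) = sl W P Q := by
  rcases P with _ | @⟨x₁, y₁, h₁⟩
  · exact absurd rfl hP
  rcases Q with _ | @⟨x₂, y₂, h₂⟩
  · exact absurd rfl hQ
  have hxy : x₁ = x₂ → y₁ ≠ W.negY x₂ y₂ := fun hx hy => hPQ (add_of_Y_eq hx hy)
  have hne : ¬(x₂ = W.addX x₁ x₂ (W.slope x₁ x₂ y₁ y₂) ∧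
      y₂ = W.negY (W.addX x₁ x₂ (W.slope x₁ x₂ y₁ y₂))
        (W.negAddY x₁ x₂ y₁ (W.slope x₁ x₂ y₁ y₂))) := by
    rintro ⟨hx, hy⟩
    apply hP
    have heq : some _ _ h₁ + some _ _ h₂ = (0 : W.Point) + some _ _ h₂ := by
      rw [add_some (fun h => hxy h.1 h.2), zero_add]
      exact some_eq_some_s2 _ _ hx.symm hy.symm
    exact add_right_cancel heq
  rw [add_some (fun h => hxy h.1 h.2), neg_some]
  show W.slope x₂ (W.addX x₁ x₂ (W.slope x₁ x₂ y₁ y₂)) y₂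
      (W.negY (W.addX x₁ x₂ (W.slope x₁ x₂ y₁ y₂)) (W.addY x₁ x₂ y₁ (W.slope x₁ x₂ y₁ y₂))) =
      W.slope x₁ x₂ y₁ y₂
  rw [addY, negY_negY]
  exact slope_cyclic h₁.left h₂.left hxy hne

lemma sl_comm (W : WeierstrassCurve.Affine F) (P Q : W.Point)
    (hP : P ≠ 0) (hQ : Q ≠ 0) (hPQ : P + Q ≠ 0) :
    sl W Q P = sl W P Q := by
  rcases P with _ | @⟨x₁, y₁, h₁⟩
  · exact absurd rfl hP
  rcases Q with _ | @⟨x₂, y₂, h₂⟩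
  · exact absurd rfl hQ
  have hxy : x₁ = x₂ → y₁ ≠ W.negY x₂ y₂ := fun hx hy => hPQ (add_of_Y_eq hx hy)
  exact slope_comm' h₁.left h₂.left hxy

lemma sl_neg (W : WeierstrassCurve.Affine F) (P Q : W.Point)
    (hP : P ≠ 0) (hQ : Q ≠ 0) (hPQ : P + Q ≠ 0) :
    sl W (-P) (-Q) = -sl W P Q - W.a₁ := by
  rcases P with _ | @⟨x₁, y₁, h₁⟩
  · exact absurd rfl hP
  rcases Q with _ | @⟨x₂, y₂, h₂⟩
  · exact absurd rfl hQ
  have hxy : x₁ = x₂ → y₁ ≠ W.negY x₂ y₂ := fun hx hy => hPQ (add_of_Y_eq hx hy)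
  exact slope_neg' h₁.left h₂.left hxy

/-- symmetry relations
`Γ(A,B,C) = u_{B,C}(A) = u_{C,A}(B) = -u_{B,A}(C) - a₁` for pairwise distinct `A, B, C`. -/
theorem Gamma_symm {F : Type*} [Field F] (W : WeierstrassCurve.Affine F)
    (A B C : W.Point) (hAB : A ≠ B) (hBC : B ≠ C) (hAC : A ≠ C) :
    Gam W A B C = uf W B C A ∧ Gam W A B C = uf W C A B ∧
      Gam W A B C = -uf W B A C - W.a₁ := by
  have hP : C - A ≠ 0 := sub_ne_zero.mpr (Ne.symm hAC)
  have hQ : A - B ≠ 0 := sub_ne_zero.mpr hAB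
  have hR : B - C ≠ 0 := sub_ne_zero.mpr hBC
  have hPQ : (C - A) + (A - B) = -(B - C) := by abel
  have hQR : (A - B) + (B - C) = -(C - A) := by abel
  have hRQ : (B - C) + (A - B) = -(C - A) := by abel
  have hPQ0 : (C - A) + (A - B) ≠ 0 := by rw [hPQ]; exact neg_ne_zero.mpr hR
  have hQR0 : (A - B) + (B - C) ≠ 0 := by rw [hQR]; exact neg_ne_zero.mpr hP
  have hRQ0 : (B - C) + (A - B) ≠ 0 := by rw [hRQ]; exact neg_ne_zero.mpr hP
  -- g1 : sl (A-B) (B-C) = sl (C-A) (A-B)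
  have g1 : sl W (A - B) (B - C) = sl W (C - A) (A - B) := by
    have := sl_cyclic W (C - A) (A - B) hP hQ hPQ0
    rwa [hPQ, neg_neg] at this
  -- g2 : sl (B-C) (C-A) = sl (A-B) (B-C)
  have g2 : sl W (B - C) (C - A) = sl W (A - B) (B - C) := by
    have := sl_cyclic W (A - B) (B - C) hQ hR hQR0
    rwa [hQR, neg_neg] at this
  -- g3 : sl (C-B) (B-A) = -sl (B-C) (A-B) - a₁
  have g3 : sl W (C - B) (B - A) = -sl W (B - C) (A - B) - W.a₁ := by
    have := sl_neg W (B - C) (A - B) hR hQ hRQ0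
    rwa [neg_sub B C, neg_sub A B] at this
  have g4 : sl W (B - C) (A - B) = sl W (A - B) (B - C) :=
    sl_comm W (A - B) (B - C) hQ hR hQR0
  refine ⟨?_, ?_, ?_⟩
  · show sl W (C - A) (A - B) = sl W (A - B) (B - C)
    exact g1.symm
  · show sl W (C - A) (A - B) = sl W (B - C) (C - A)
    rw [g2, g1]
  · show sl W (C - A) (A - B) = -sl W (C - B) (B - A) - W.a₁
    rw [g3, g4, g1]
    ring

end EllipticPeriods
end
end

section
/- Let E be an elliptic curve over K = 𝔽_q, t ∈ E(𝔽_q) a point of order d ≥ 2 generating T, φ the q-power Frobenius endomorphism, and b ∈ E(K̄) a point with φ(b) = b + t and d·b ≠ O. Then the system Ω = (ω₀, ω₁, ..., ω_{d-1}), where ω₀ = 1 and ω_k = u_{O,kt}(b) for k ≢ 0 mod d, is a K-basis of the degree-d extension L = 𝔽_{q^d} of K. -/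
noncomputable section
namespace EllipticPeriods

variable {F : Type*} [Field F]

open Classical

/-! ### Auxiliary lemmas on points -/

open Polynomial
open scoped Polynomial.Bivariate nonZeroDivisors

namespace Aux

open WeierstrassCurve.Affine WeierstrassCurve.Affine.Point

variable {W : WeierstrassCurve.Affine F}

lemma eq_some (Q : W.Point) (h0 : Q ≠ 0) :
    ∃ hn : W.Nonsingular (xc Q) (yc Q), Q = Point.some _ _ hn := by
  cases Q with
  | zero => exact absurd rfl h0
  | some _ _ h => exact ⟨h, rfl⟩

lemma some_congr {x₁ y₁ x₂ y₂ : F} {h₁ : W.Nonsingular x₁ y₁} {h₂ : W.Nonsingular x₂ y₂}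
    (hx : x₁ = x₂) (hy : y₁ = y₂) : Point.some _ _ h₁ = Point.some _ _ h₂ := by
  subst hx; subst hy; rfl

lemma xc_neg (Q : W.Point) : xc (-Q) = xc Q := by
  cases Q with
  | zero => rfl
  | some _ _ h => rw [neg_some]; rfl

/-- Two affine points with the same x-coordinate are equal or negatives. -/
lemma eq_or_eq_neg_of_xc_eq {P Q : W.Point} (hP : P ≠ 0) (hQ : Q ≠ 0)
    (hx : xc P = xc Q) : P = Q ∨ P = -Q := by
  obtain ⟨hnP, hPe⟩ := eq_some P hP
  obtain ⟨hnQ, hQe⟩ := eq_some Q hQ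
  rcases Y_eq_of_X_eq hnP.left hnQ.left hx with hy | hy
  · exact Or.inl <| by rw [hPe, hQe]; exact some_congr hx hy
  · exact Or.inr <| by rw [hPe, hQe, neg_some]; exact some_congr hx hy

section Sigma

variable (σ : F →+* F) (hm : WeierstrassCurve.map W σ = W)

include hm in
lemma σ_nonsingular {x y : F} (h : W.Nonsingular x y) : W.Nonsingular (σ x) (σ y) := by
  have := W.map_nonsingular (f := σ) σ.injective x y
  rw [show W.map σ = W from hm] at this
  exact this.mpr h

/-- Coordinatewise application of a field endomorphism fixing the curve. -/
def sPt : W.Point → W.Point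
  | .zero => .zero
  | .some _ _ h => .some _ _ (σ_nonsingular σ hm h)

lemma sPt_zero : sPt σ hm (0 : W.Point) = 0 := rfl

lemma sPt_some {x y : F} (h : W.Nonsingular x y) :
    sPt σ hm (Point.some _ _ h) = Point.some _ _ (σ_nonsingular σ hm h) := rfl

include hm in
lemma σ_negY (x y : F) : W.negY (σ x) (σ y) = σ (W.negY x y) := by
  have := W.map_negY σ x y; rwa [show W.map σ = W from hm] at this

include hm in
lemma σ_slope (x₁ x₂ y₁ y₂ : F) :
    W.slope (σ x₁) (σ x₂) (σ y₁) (σ y₂) = σ (W.slope x₁ x₂ y₁ y₂) := by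
  have := W.map_slope σ x₁ x₂ y₁ y₂; rwa [show W.map σ = W from hm] at this

include hm in
lemma σ_addX (x₁ x₂ l : F) : W.addX (σ x₁) (σ x₂) (σ l) = σ (W.addX x₁ x₂ l) := by
  have := W.map_addX σ x₁ x₂ l; rwa [show W.map σ = W from hm] at this

include hm in
lemma σ_addY (x₁ x₂ y₁ l : F) : W.addY (σ x₁) (σ x₂) (σ y₁) (σ l) = σ (W.addY x₁ x₂ y₁ l) := by
  have := W.map_addY σ x₁ y₁ x₂ l; rwa [show W.map σ = W from hm] at this

lemma sPt_add (P Q : W.Point) : sPt σ hm (P + Q) = sPt σ hm P + sPt σ hm Q := by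
  rcases P, Q with ⟨_ | @⟨x₁, y₁, h₁⟩, _ | @⟨x₂, y₂, h₂⟩⟩
  · rfl
  · show sPt σ hm (0 + _) = sPt σ hm 0 + _; rw [zero_add, sPt_zero, zero_add]
  · show sPt σ hm (_ + 0) = _ + sPt σ hm 0; rw [add_zero, sPt_zero, add_zero]
  · by_cases hxy : x₁ = x₂ ∧ y₁ = W.negY x₂ y₂
    · rw [add_of_Y_eq hxy.1 hxy.2, sPt_some, sPt_some, sPt_zero,
        add_of_Y_eq (congrArg σ hxy.1) (by rw [hxy.2, ← σ_negY σ hm])]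
    · have hxy' : x₁ = x₂ → y₁ ≠ W.negY x₂ y₂ := fun hx hy => hxy ⟨hx, hy⟩
      have hxy'' : σ x₁ = σ x₂ → σ y₁ ≠ W.negY (σ x₂) (σ y₂) := by
        intro hx hy
        rw [σ_negY σ hm] at hy
        exact hxy' (σ.injective hx) (σ.injective hy)
      rw [add_some (by tauto), sPt_some, sPt_some, sPt_some, add_some (by tauto)]
      exact some_congr (by rw [σ_slope σ hm, σ_addX σ hm])
        (by rw [σ_slope σ hm, σ_addY σ hm])

/-- The point map as an additive monoid hom. -/
def sHom : W.Point →+ W.Point := AddMonoidHom.mk' (sPt σ hm) (sPt_add σ hm)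

end Sigma

end Aux

/-- Extensionality for Weierstrass curves. -/
lemma WC_ext {V V' : WeierstrassCurve F} (h1 : V.a₁ = V'.a₁) (h2 : V.a₂ = V'.a₂)
    (h3 : V.a₃ = V'.a₃) (h4 : V.a₄ = V'.a₄) (h6 : V.a₆ = V'.a₆) : V = V' := by
  cases V; cases V'
  simp only [WeierstrassCurve.mk.injEq]
  exact ⟨h1, h2, h3, h4, h6⟩

/-! ### The divisor-theoretic core lemma -/

namespace Divisor

open Polynomial Ideal WeierstrassCurve.Affine WeierstrassCurve.Affine.Point

variable {L : Type*} [Field L] {W : WeierstrassCurve.Affine L}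

/-- Evaluation of the coordinate ring at an affine point, as an `L`-algebra hom. -/
def evAt {x₀ y₀ : L} (h : W.Equation x₀ y₀) : W.CoordinateRing →ₐ[L] L where
  toRingHom := AdjoinRoot.evalEval h
  commutes' := fun z => by
    have h1 : algebraMap L W.CoordinateRing z = CoordinateRing.mk W (Polynomial.C (C z)) := by
      rw [IsScalarTower.algebraMap_apply L L[X] W.CoordinateRing, Polynomial.algebraMap_eq]; rfl
    show AdjoinRoot.evalEval h (algebraMap L W.CoordinateRing z) = algebraMap L L z
    rw [h1]
    erw [AdjoinRoot.evalEval_mk]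
    simp [Polynomial.evalEval]

lemma evAt_mk {x₀ y₀ : L} (h : W.Equation x₀ y₀) (g : L[X][Y]) :
    evAt h (CoordinateRing.mk W g) = g.evalEval x₀ y₀ :=
  AdjoinRoot.evalEval_mk h g

lemma evAt_smul_basis {x₀ y₀ : L} (h : W.Equation x₀ y₀) (p q : L[X]) :
    evAt h (p • (1 : W.CoordinateRing) + q • CoordinateRing.mk W Y) =
      p.eval x₀ + q.eval x₀ * y₀ := by
  rw [CoordinateRing.smul, CoordinateRing.smul, mul_one]
  rw [← _root_.map_mul, ← _root_.map_add, evAt_mk]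
  simp [Polynomial.evalEval]

lemma evAt_XClass {x₀ y₀ : L} (h : W.Equation x₀ y₀) (x : L) :
    evAt h (CoordinateRing.XClass W x) = x₀ - x := by
  rw [CoordinateRing.XClass, evAt_mk]; simp [Polynomial.evalEval]

lemma evAt_YClass {x₀ y₀ : L} (h : W.Equation x₀ y₀) (y : L) :
    evAt h (CoordinateRing.YClass W (C y)) = y₀ - y := by
  rw [CoordinateRing.YClass, evAt_mk]; simp [Polynomial.evalEval]

lemma XYIdeal_isMaximal {x₀ y₀ : L} (h : W.Equation x₀ y₀) :
    (CoordinateRing.XYIdeal W x₀ (C y₀)).IsMaximal := by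
  refine Ideal.Quotient.maximal_of_isField _ ?_
  exact MulEquiv.isField (Field.toIsField L)
    (CoordinateRing.quotientXYIdealEquiv (W' := W) (by exact h)).toMulEquiv

lemma ker_evAt {x₀ y₀ : L} (h : W.Equation x₀ y₀) :
    RingHom.ker (evAt h : W.CoordinateRing →+* L) = CoordinateRing.XYIdeal W x₀ (C y₀) := by
  refine ((XYIdeal_isMaximal h).eq_of_le ?_ ?_).symm
  · intro htop
    have : (1 : L) = 0 := by
      have := RingHom.mem_ker (f := (evAt h : W.CoordinateRing →+* L)) (r := 1)
      simp only [htop] at this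
      simpa using (this.mp Submodule.mem_top)
    simp at this
  · rw [CoordinateRing.XYIdeal, span_le]
    rintro z (rfl | rfl)
    · rw [SetLike.mem_coe, RingHom.mem_ker]
      have := evAt_XClass h x₀; simpa using this
    · rw [SetLike.mem_coe, RingHom.mem_ker]
      have := evAt_YClass h y₀; simpa using this

private lemma prod_eq_inf_of_pairwise {ι : Type*} (s : Finset ι) (f : ι → Ideal W.CoordinateRing)
    (h : ∀ i ∈ s, ∀ j ∈ s, i ≠ j → f i ⊔ f j = ⊤) : s.prod f = s.inf f := by
  classical
  induction s using Finset.induction_on with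
  | empty => simp [Ideal.one_eq_top]
  | @insert a s ha ih =>
    rw [Finset.prod_insert ha, Finset.inf_insert]
    rw [Ideal.mul_eq_inf_of_coprime, ih (fun i hi j hj hij => h i (by simp [hi]) j (by simp [hj]) hij)]
    exact Ideal.sup_prod_eq_top fun j hj =>
      h a (by simp) j (by simp [hj]) (fun e => ha (e ▸ hj))

/-- The core lemma: if a nonzero function `A(x) + B(x) y` of bounded degree vanishes at
distinct affine points `P i`, in number equal to the degree bound, then `∑ P i = 0`
in the group of the curve. -/
theorem sum_eq_zero_of_vanishing {ι : Type*} [Fintype ι]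
    (P : ι → W.Point) (hP0 : ∀ i, P i ≠ 0) (hPinj : Function.Injective P)
    (A B : L[X])
    (hAd : 2 * A.natDegree ≤ Fintype.card ι)
    (hBd : B = 0 ∨ 2 * B.natDegree + 3 ≤ Fintype.card ι)
    (hG : A • (1 : W.CoordinateRing) + B • CoordinateRing.mk W Y ≠ 0)
    (hvan : ∀ i, A.eval (xc (P i)) + B.eval (xc (P i)) * yc (P i) = 0) :
    ∑ i, P i = 0 := by
  classical
  set G : W.CoordinateRing := A • (1 : W.CoordinateRing) + B • CoordinateRing.mk W Y with hGdef
  choose hn hPeq using fun i => Aux.eq_some (P i) (hP0 i)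
  set x : ι → L := fun i => xc (P i) with hxdef
  set y : ι → L := fun i => yc (P i) with hydef
  set M : ι → Ideal W.CoordinateRing := fun i => CoordinateRing.XYIdeal W (x i) (C (y i)) with hMdef
  set ev : ∀ i, W.CoordinateRing →ₐ[L] L := fun i => evAt (hn i).left with hevdef
  have hker : ∀ i, RingHom.ker ((ev i) : W.CoordinateRing →+* L) = M i := fun i =>
    ker_evAt (hn i).left
  have hevG : ∀ i, ev i G = 0 := by
    intro i
    rw [hGdef]
    show evAt (hn i).left (A • (1 : W.CoordinateRing) + B • CoordinateRing.mk W Y) = 0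
    rw [evAt_smul_basis]
    exact hvan i
  have hMne : ∀ i j, i ≠ j → M i ≠ M j := by
    intro i j hij heq
    have hx' : CoordinateRing.XClass W (x i) ∈ M j := by
      rw [← heq, hMdef]
      exact subset_span (Set.mem_insert _ _)
    have hy' : CoordinateRing.YClass W (C (y i)) ∈ M j := by
      rw [← heq, hMdef]
      exact subset_span (Set.mem_insert_of_mem _ rfl)
    rw [← hker j, RingHom.mem_ker] at hx' hy'
    have hex := evAt_XClass (W := W) (hn j).left (x i)
    have hey := evAt_YClass (W := W) (hn j).left (y i)
    have hxx : x i = x j := by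
      have : evAt (hn j).left (CoordinateRing.XClass W (x i)) = 0 := hx'
      rw [hex] at this; linear_combination -this
    have hyy : y i = y j := by
      have : evAt (hn j).left (CoordinateRing.YClass W (C (y i))) = 0 := hy'
      rw [hey] at this; linear_combination -this
    apply hij
    apply hPinj
    rw [hPeq i, hPeq j]
    exact Aux.some_congr hxx hyy
  have hMmax : ∀ i, (M i).IsMaximal := fun i => XYIdeal_isMaximal (hn i).left
  have hsup : ∀ i j, i ≠ j → M i ⊔ M j = ⊤ := fun i j hij =>
    (hMmax i).coprime_of_ne (hMmax j) (hMne i j hij)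
  set Ψ : W.CoordinateRing →ₐ[L] (ι → L) := Pi.algHom L (fun _ => L) ev with hΨdef
  have hΨapp : ∀ r i, Ψ r i = ev i r := fun r i => rfl
  have hkerΨ : RingHom.ker (Ψ : W.CoordinateRing →+* (ι → L)) = ⨅ i, M i := by
    ext r
    simp only [RingHom.mem_ker, Submodule.mem_iInf]
    constructor
    · intro hr i
      rw [← hker i, RingHom.mem_ker]
      exact congrFun hr i
    · intro hr
      funext i
      have := hr i
      rw [← hker i, RingHom.mem_ker] at this
      exact this
  have hsingle : ∀ i, ∃ r, Ψ r = Pi.single i 1 := by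
    intro i
    have hfac : ∀ j : ι, ∃ w : W.CoordinateRing, ev i w = 1 ∧ (j ≠ i → ev j w = 0) := by
      intro j
      by_cases hj : j = i
      · exact ⟨1, map_one _, fun h => absurd hj h⟩
      · have : (1 : W.CoordinateRing) ∈ M j ⊔ M i := by rw [hsup j i hj]; trivial
        obtain ⟨u, hu, v, hv, huv⟩ := Submodule.mem_sup.mp this
        refine ⟨u, ?_, fun _ => ?_⟩
        · have hvi : ev i v = 0 := by
            rw [← hker i] at hv; exact RingHom.mem_ker.mp hv
          have h1 : ev i (u + v) = 1 := by rw [huv]; exact map_one _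
          rw [map_add, hvi, add_zero] at h1
          exact h1
        · rw [← hker j] at hu
          exact RingHom.mem_ker.mp hu
    choose w hw1 hw0 using hfac
    refine ⟨∏ j ∈ Finset.univ.erase i, w j, ?_⟩
    funext k
    rw [hΨapp, map_prod]
    by_cases hk : k = i
    · subst hk
      rw [Pi.single_eq_same]
      exact Finset.prod_eq_one fun j hj => hw1 j
    · rw [Pi.single_eq_of_ne hk]
      exact Finset.prod_eq_zero (Finset.mem_erase.mpr ⟨hk, Finset.mem_univ k⟩) (hw0 k hk)
  have hΨsurj : Function.Surjective Ψ := by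
    have hrg : LinearMap.range Ψ.toLinearMap = ⊤ := by
      rw [← top_le_iff, ← (Pi.basisFun L ι).span_eq, Submodule.span_le]
      rintro z ⟨i, rfl⟩
      obtain ⟨r, hr⟩ := hsingle i
      refine ⟨r, ?_⟩
      rw [Pi.basisFun_apply]
      exact hr
    exact LinearMap.range_eq_top.mp hrg
  have hGmem : ∀ i, G ∈ M i := fun i => by
    rw [← hker i]; exact RingHom.mem_ker.mpr (hevG i)
  have hspan_le : span ({G} : Set W.CoordinateRing) ≤ ⨅ i, M i := by
    rw [span_le, Set.singleton_subset_iff, SetLike.mem_coe, Submodule.mem_iInf]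
    exact hGmem
  have hbot : span ({G} : Set W.CoordinateRing) ≠ ⊥ := by
    rwa [Ne, span_singleton_eq_bot]
  haveI hfinpi : ∀ i : Fin 2, FiniteDimensional L (L[X] ⧸ span
      {(span ({G} : Set W.CoordinateRing)).smithCoeffs (CoordinateRing.basis W) hbot i}) :=
    fun i => PowerBasis.finite (AdjoinRoot.powerBasis
      (Ideal.smithCoeffs_ne_zero (CoordinateRing.basis W) _ hbot i))
  haveI hfinT : FiniteDimensional L (W.CoordinateRing ⧸ span ({G} : Set W.CoordinateRing)) :=
    Module.Finite.equiv ((Ideal.quotientEquivPiSpan (span {G})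
      (CoordinateRing.basis W) hbot).restrictScalars L).symm
  have hfinrankT : Module.finrank L (W.CoordinateRing ⧸ span ({G} : Set W.CoordinateRing)) =
      (Algebra.norm L[X] G).natDegree :=
    finrank_quotient_span_eq_natDegree_norm (CoordinateRing.basis W) hG
  have hnormdeg : (Algebra.norm L[X] G).natDegree ≤ Fintype.card ι := by
    have hdeg := CoordinateRing.degree_norm_smul_basis (W' := W) A B
    refine natDegree_le_iff_degree_le.mpr ?_
    rw [hGdef, hdeg, sup_le_iff]
    constructor
    · have hA2 : 2 • A.degree ≤ ((2 * A.natDegree : ℕ) : WithBot ℕ) := by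
        rw [two_nsmul, two_mul, Nat.cast_add]
        exact add_le_add A.degree_le_natDegree A.degree_le_natDegree
      exact hA2.trans (WithBot.coe_le_coe.mpr hAd)
    · rcases hBd with hB0 | hBd'
      · simp [hB0, two_nsmul]
      · have hB2 : 2 • B.degree + 3 ≤ ((2 * B.natDegree + 3 : ℕ) : WithBot ℕ) := by
          rw [two_nsmul, two_mul]
          push_cast
          exact add_le_add (add_le_add B.degree_le_natDegree B.degree_le_natDegree) le_rfl
        exact hB2.trans (WithBot.coe_le_coe.mpr hBd')
  have hkerle : ∀ a ∈ span ({G} : Set W.CoordinateRing), Ψ a = 0 := fun a ha => by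
    have hm : a ∈ RingHom.ker (Ψ : W.CoordinateRing →+* (ι → L)) := by
      rw [hkerΨ]; exact hspan_le ha
    exact RingHom.mem_ker.mp hm
  set Ψb := Ideal.Quotient.liftₐ (span {G}) Ψ hkerle with hΨbdef
  have hΨbmk : ∀ r, Ψb (Ideal.Quotient.mk _ r) = Ψ r := fun r => by
    rw [hΨbdef, Ideal.Quotient.liftₐ_apply]
    exact Ideal.Quotient.lift_mk _ _ _
  have hΨbsurj : Function.Surjective Ψb := by
    intro z
    obtain ⟨r, hr⟩ := hΨsurj z
    exact ⟨Ideal.Quotient.mk _ r, by rw [hΨbmk]; exact hr⟩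
  have hle : Module.finrank L (ι → L) ≤
      Module.finrank L (W.CoordinateRing ⧸ span ({G} : Set W.CoordinateRing)) := by
    have hrange : LinearMap.range Ψb.toLinearMap = ⊤ :=
      LinearMap.range_eq_top.mpr hΨbsurj
    calc Module.finrank L (ι → L) = Module.finrank L (⊤ : Submodule L (ι → L)) :=
          (finrank_top _ _).symm
      _ = Module.finrank L (LinearMap.range Ψb.toLinearMap) := by rw [hrange]
      _ ≤ _ := LinearMap.finrank_range_le Ψb.toLinearMap
  have hpicard : Module.finrank L (ι → L) = Fintype.card ι := by
    simp [Module.finrank_pi]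
  have heqrank : Module.finrank L (W.CoordinateRing ⧸ span ({G} : Set W.CoordinateRing)) =
      Module.finrank L (ι → L) := by
    refine le_antisymm ?_ hle
    rw [hfinrankT, hpicard]
    exact hnormdeg
  have hΨbinj : Function.Injective Ψb :=
    (LinearMap.injective_iff_surjective_of_finrank_eq_finrank (f := Ψb.toLinearMap)
      heqrank).mpr hΨbsurj
  have hIeq : (⨅ i, M i) ≤ span ({G} : Set W.CoordinateRing) := by
    intro r hr
    have h0 : Ψ r = 0 := by
      have hm : r ∈ RingHom.ker (Ψ : W.CoordinateRing →+* (ι → L)) := by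
        rw [hkerΨ]; exact hr
      exact RingHom.mem_ker.mp hm
    have h1 : Ψb (Ideal.Quotient.mk _ r) = Ψb 0 := by
      rw [hΨbmk, h0, _root_.map_zero]
    exact (Ideal.Quotient.eq_zero_iff_mem).mp (hΨbinj h1)
  have hspan_eq : span ({G} : Set W.CoordinateRing) = ⨅ i, M i :=
    le_antisymm hspan_le hIeq
  have hprod : ∏ i, M i = span ({G} : Set W.CoordinateRing) := by
    rw [prod_eq_inf_of_pairwise Finset.univ M (fun i _ j _ hij => hsup i j hij), hspan_eq]
    rw [Finset.inf_eq_iInf]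
    simp
  have hcoe : ((∏ i, CoordinateRing.XYIdeal' (hn i) :
        (FractionalIdeal W.CoordinateRing⁰ W.FunctionField)ˣ) :
        FractionalIdeal W.CoordinateRing⁰ W.FunctionField) =
      ((span ({G} : Set W.CoordinateRing) : Ideal W.CoordinateRing) :
        FractionalIdeal W.CoordinateRing⁰ W.FunctionField) := by
    have h1 : ((∏ i, CoordinateRing.XYIdeal' (hn i) :
          (FractionalIdeal W.CoordinateRing⁰ W.FunctionField)ˣ) :
          FractionalIdeal W.CoordinateRing⁰ W.FunctionField) =
        ∏ i, ((CoordinateRing.XYIdeal' (hn i) :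
          (FractionalIdeal W.CoordinateRing⁰ W.FunctionField)ˣ) :
          FractionalIdeal W.CoordinateRing⁰ W.FunctionField) :=
      map_prod (Units.coeHom (FractionalIdeal W.CoordinateRing⁰ W.FunctionField)) _ _
    have h2 : (((∏ i, M i : Ideal W.CoordinateRing)) :
          FractionalIdeal W.CoordinateRing⁰ W.FunctionField) =
        ∏ i, ((M i : Ideal W.CoordinateRing) :
          FractionalIdeal W.CoordinateRing⁰ W.FunctionField) :=
      map_prod (FractionalIdeal.coeIdealHom W.CoordinateRing⁰ W.FunctionField) _ _
    rw [h1, ← hprod, h2]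
    refine Finset.prod_congr rfl fun i _ => ?_
    exact CoordinateRing.XYIdeal'_eq (hn i)
  have hmk1 : ∏ i, ClassGroup.mk W.FunctionField (CoordinateRing.XYIdeal' (hn i)) = 1 := by
    rw [← map_prod]
    exact (ClassGroup.mk_eq_one_of_coe_ideal hcoe).mpr ⟨G, hG, rfl⟩
  have htc : Point.toClass (∑ i, P i) = 0 := by
    rw [map_sum]
    have hterm : ∀ i, Point.toClass (P i) =
        Additive.ofMul (ClassGroup.mk W.FunctionField (CoordinateRing.XYIdeal' (hn i))) := fun i =>
      (congrArg Point.toClass (hPeq i)).trans (toClass_some (hn i))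
    rw [Finset.sum_congr rfl fun i _ => hterm i, ← ofMul_prod, hmk1]
    rfl
  exact (toClass_eq_zero _).mp htc

end Divisor

/-! ### The polynomial extraction lemma -/

namespace Extraction

open Polynomial Finset

theorem extraction {L : Type*} [Field L] (d : ℕ) (hd : 2 ≤ d)
    (x y c : ℕ → L)
    (hx : ∀ k ∈ Finset.Ioo 0 d, ∀ m ∈ Finset.Ioo 0 d, (x k = x m ↔ m = k ∨ m + k = d))
    (hy : ∀ k ∈ Finset.Ioo 0 d, ∀ m ∈ Finset.Ioo 0 d, m ≠ k → m + k = d → y k ≠ y m)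
    (hB : ∑ k ∈ Finset.Ioo 0 d, C (c k) * ∏ j ∈ (Finset.Ioo 0 d).erase k, (X - C (x j)) = 0)
    (hA : C (c 0) * ∏ j ∈ Finset.Ioo 0 d, (X - C (x j))
        - ∑ k ∈ Finset.Ioo 0 d, C (c k * y k) * ∏ j ∈ (Finset.Ioo 0 d).erase k, (X - C (x j)) = 0) :
    ∀ k, k < d → c k = 0 := by
  classical
  set J := Finset.Ioo 0 d with hJdef
  have hmain : ∀ m ∈ J, c m = 0 := by
    intro m hm
    obtain ⟨hm0, hmd⟩ := Finset.mem_Ioo.mp hm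
    by_cases h2 : 2 * m = d
    · -- the self-paired case : simple evaluation at x m
      have hBe := congrArg (Polynomial.eval (x m)) hB
      simp only [eval_finset_sum, eval_mul, eval_C, eval_prod, eval_sub, eval_X,
        eval_zero] at hBe
      rw [Finset.sum_eq_single_of_mem m hm (fun k hk hkm => ?_)] at hBe
      · have hne : ∏ j ∈ J.erase m, (x m - x j) ≠ 0 := by
          rw [Finset.prod_ne_zero_iff]
          intro j hj
          obtain ⟨hjm, hjJ⟩ := Finset.mem_erase.mp hj
          refine sub_ne_zero_of_ne fun he => ?_
          rcases (hx j hjJ m hm).mp he.symm with h | h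
          · exact hjm h.symm
          · exact hjm (by omega)
        exact (mul_eq_zero.mp hBe).resolve_right hne
      · refine mul_eq_zero_of_right _ ?_
        refine Finset.prod_eq_zero (Finset.mem_erase.mpr ⟨(Ne.symm hkm), hm⟩) ?_
        exact sub_self (x m)
    · -- the properly paired case
      set m' := d - m with hm'def
      have hm'J : m' ∈ J := Finset.mem_Ioo.mpr (by omega)
      have hm'm : m' ≠ m := by omega
      have hxm : x m' = x m := (hx m' hm'J m hm).mpr (Or.inr (by omega))
      have hym : y m ≠ y m' := hy m hm m' hm'J hm'm (by omega)
      set s := (J.erase m).erase m' with hsdef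
      have hmJ' : m' ∈ J.erase m := Finset.mem_erase.mpr ⟨hm'm, hm'J⟩
      have hmJm' : m ∈ J.erase m' := Finset.mem_erase.mpr ⟨Ne.symm hm'm, hm⟩
      have hsmem : ∀ k ∈ s, k ∈ J ∧ k ≠ m ∧ k ≠ m' := by
        intro k hk
        obtain ⟨hk1, hk2⟩ := Finset.mem_erase.mp hk
        obtain ⟨hk3, hk4⟩ := Finset.mem_erase.mp hk2
        exact ⟨hk4, hk3, hk1⟩
      have hxs : ∀ j ∈ s, x j ≠ x m := by
        intro j hj he
        obtain ⟨hjJ, hjm, hjm'⟩ := hsmem j hj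
        rcases (hx j hjJ m hm).mp he with h | h
        · exact hjm h.symm
        · exact hjm' (by omega)
      set Q : L[X] := ∏ j ∈ s, (X - C (x j)) with hQdef
      have hQm : Polynomial.eval (x m) Q ≠ 0 := by
        rw [hQdef, eval_prod, Finset.prod_ne_zero_iff]
        intro j hj
        simp only [eval_sub, eval_X, eval_C]
        exact sub_ne_zero_of_ne (Ne.symm (hxs j hj))
      have hDkm : ∏ j ∈ J.erase m, (X - C (x j)) = (X - C (x m)) * Q := by
        rw [hQdef, ← Finset.mul_prod_erase (J.erase m) _ hmJ', hxm, hsdef]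
      have hDkm' : ∏ j ∈ J.erase m', (X - C (x j)) = (X - C (x m)) * Q := by
        rw [hQdef, ← Finset.mul_prod_erase (J.erase m') _ hmJm', hsdef, Finset.erase_right_comm]
      have hDk2 : ∀ k ∈ s, ∃ Rk : L[X],
          ∏ j ∈ J.erase k, (X - C (x j)) = (X - C (x m))^2 * Rk := by
        intro k hk
        obtain ⟨hkJ, hkm, hkm'⟩ := hsmem k hk
        have h1 : m ∈ J.erase k := Finset.mem_erase.mpr ⟨(Ne.symm hkm), hm⟩
        have h2 : m' ∈ (J.erase k).erase m :=
          Finset.mem_erase.mpr ⟨hm'm, Finset.mem_erase.mpr ⟨(Ne.symm hkm'), hm'J⟩⟩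
        refine ⟨∏ j ∈ ((J.erase k).erase m).erase m', (X - C (x j)), ?_⟩
        rw [← Finset.mul_prod_erase (J.erase k) _ h1, ← Finset.mul_prod_erase
          ((J.erase k).erase m) _ h2, hxm]
        ring
      choose R hR using hDk2
      -- decomposition of the B-identity
      have hBsplit := hB
      rw [← Finset.add_sum_erase J (fun k => C (c k) * ∏ j ∈ J.erase k, (X - C (x j))) hm,
        ← Finset.add_sum_erase (J.erase m) (fun k => C (c k) * ∏ j ∈ J.erase k, (X - C (x j)))
          hmJ', hDkm, hDkm', ← hsdef] at hBsplit
      have hrest : ∑ k ∈ s, C (c k) * ∏ j ∈ J.erase k, (X - C (x j))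
          = (X - C (x m))^2 * ∑ k ∈ s.attach, C (c k.1) * R k.1 k.2 := by
        rw [Finset.mul_sum, ← Finset.sum_attach s
          (fun k => C (c k) * ∏ j ∈ J.erase k, (X - C (x j)))]
        refine Finset.sum_congr rfl fun k _ => ?_
        rw [hR k.1 k.2]; ring
      set H : L[X] := ∑ k ∈ s.attach, C (c k.1) * R k.1 k.2 with hHdef
      have hfac : (X - C (x m)) * ((C (c m) + C (c m')) * Q + (X - C (x m)) * H) = 0 := by
        rw [hHdef]
        linear_combination hBsplit - hrest
      have hinner : (C (c m) + C (c m')) * Q + (X - C (x m)) * H = 0 :=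
        (mul_eq_zero.mp hfac).resolve_left (X_sub_C_ne_zero (x m))
      have hcc' : c m + c m' = 0 := by
        have he := congrArg (Polynomial.eval (x m)) hinner
        simp only [eval_add, eval_mul, eval_C, eval_sub, eval_X, eval_zero] at he
        have he' : (c m + c m') * Polynomial.eval (x m) Q = 0 := by linear_combination he
        exact (mul_eq_zero.mp he').resolve_right hQm
      -- decomposition of the A-identity
      have hD : ∏ j ∈ J, (X - C (x j)) = (X - C (x m))^2 * Q := by
        rw [← Finset.mul_prod_erase J _ hm, hDkm]; ring
      have hAsplit := hA
      rw [← Finset.add_sum_erase J (fun k => C (c k * y k) * ∏ j ∈ J.erase k, (X - C (x j))) hm,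
        ← Finset.add_sum_erase (J.erase m)
          (fun k => C (c k * y k) * ∏ j ∈ J.erase k, (X - C (x j))) hmJ',
        hD, hDkm, hDkm', ← hsdef] at hAsplit
      have hrest2 : ∑ k ∈ s, C (c k * y k) * ∏ j ∈ J.erase k, (X - C (x j))
          = (X - C (x m))^2 * ∑ k ∈ s.attach, C (c k.1 * y k.1) * R k.1 k.2 := by
        rw [Finset.mul_sum, ← Finset.sum_attach s
          (fun k => C (c k * y k) * ∏ j ∈ J.erase k, (X - C (x j)))]
        refine Finset.sum_congr rfl fun k _ => ?_
        rw [hR k.1 k.2]; ring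
      set H2 : L[X] := ∑ k ∈ s.attach, C (c k.1 * y k.1) * R k.1 k.2 with hH2def
      have hfac2 : (X - C (x m)) * (C (c 0) * ((X - C (x m)) * Q)
          - (C (c m * y m) + C (c m' * y m')) * Q - (X - C (x m)) * H2) = 0 := by
        rw [hH2def]
        linear_combination hAsplit + hrest2
      have hinner2 : C (c 0) * ((X - C (x m)) * Q)
          - (C (c m * y m) + C (c m' * y m')) * Q - (X - C (x m)) * H2 = 0 :=
        (mul_eq_zero.mp hfac2).resolve_left (X_sub_C_ne_zero (x m))
      have hyy : c m * y m + c m' * y m' = 0 := by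
        have he := congrArg (Polynomial.eval (x m)) hinner2
        simp only [eval_sub, eval_mul, eval_add, eval_C, eval_X, eval_zero] at he
        have he' : (c m * y m + c m' * y m') * Polynomial.eval (x m) Q = 0 := by
          linear_combination -he
        exact (mul_eq_zero.mp he').resolve_right hQm
      have : c m * (y m - y m') = 0 := by linear_combination hyy - y m' * hcc'
      rcases mul_eq_zero.mp this with h | h
      · exact h
      · exact absurd (sub_eq_zero.mp h) hym
  -- finally the constant coefficient
  have hc0 : c 0 = 0 := by
    have hAz : C (c 0) * ∏ j ∈ J, (X - C (x j)) = 0 := by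
      have : ∑ k ∈ J, C (c k * y k) * ∏ j ∈ J.erase k, (X - C (x j)) = 0 := by
        refine Finset.sum_eq_zero fun k hk => ?_
        rw [hmain k hk, zero_mul, map_zero, zero_mul]
      rw [this, sub_zero] at hA
      exact hA
    have hDne : ∏ j ∈ J, (X - C (x j)) ≠ 0 :=
      Finset.prod_ne_zero_iff.mpr fun j _ => X_sub_C_ne_zero (x j)
    have := (mul_eq_zero.mp hAz).resolve_right hDne
    exact_mod_cast (C_eq_zero.mp this)
  intro k hk
  rcases Nat.eq_zero_or_pos k with rfl | hk0
  · exact hc0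
  · exact hmain k (Finset.mem_Ioo.mpr ⟨hk0, hk⟩)

end Extraction

/-- the system `Ω = (ω₀, …, ω_{d-1})`, where `ω₀ = 1` and
`ω_k = u_{O,kt}(b)` for `k ≢ 0`, is an `𝔽_q`-basis of `L = 𝔽_{q^d}`. Here `K` plays the
role of `𝔽_q`, `L` is its degree-`d` extension, the curve `W` is defined over `𝔽_q`
(its coefficients are fixed by the `q`-power map), `φ` is the `q`-power Frobenius
endomorphism of the curve, `t ∈ E(𝔽_q)` has order `d`, `φ(b) = b + t` and `d·b ≠ O`. -/
theorem omega_is_basis {K L : Type*} [Field K] [Fintype K] [Field L] [Algebra K L]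
    (d : ℕ) (hd : 2 ≤ d) (hrank : Module.finrank K L = d)
    (W : WeierstrassCurve.Affine L)
    (hW : W.a₁ ^ Fintype.card K = W.a₁ ∧ W.a₂ ^ Fintype.card K = W.a₂ ∧
      W.a₃ ^ Fintype.card K = W.a₃ ∧ W.a₄ ^ Fintype.card K = W.a₄ ∧
      W.a₆ ^ Fintype.card K = W.a₆)
    (φ : W.Point → W.Point)
    (hφ : ∀ P : W.Point, xc (φ P) = xc P ^ Fintype.card K ∧
      yc (φ P) = yc P ^ Fintype.card K ∧ (φ P = 0 ↔ P = 0))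
    (t : W.Point) (ht : addOrderOf t = d) (htK : φ t = t)
    (b : W.Point) (hb : φ b = b + t) (hbd : d • b ≠ 0)
    (ω : Fin d → L)
    (hω : ∀ k : Fin d, ω k = if (k : ℕ) = 0 then 1 else uf W 0 ((k : ℕ) • t) b) :
    LinearIndependent K ω ∧ Submodule.span K (Set.range ω) = ⊤ := by
  classical
  have hfd : FiniteDimensional K L := Module.finite_of_finrank_pos (by rw [hrank]; omega)
  -- the Frobenius of L/K
  set p := ringChar K with hpdef
  haveI : CharP K p := ringChar.charP K
  obtain ⟨n, hp, hq⟩ := FiniteField.card K p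
  haveI : CharP L p := charP_of_injective_algebraMap (algebraMap K L).injective p
  haveI : ExpChar L p := ExpChar.prime hp
  set σ : L →+* L := iterateFrobenius L p n with hσdef
  have hσ : ∀ z : L, σ z = z ^ Fintype.card K := fun z => by
    rw [hσdef, iterateFrobenius_def, ← hq]
  have hσalg : ∀ a : K, σ (algebraMap K L a) = algebraMap K L a := fun a => by
    rw [hσ, ← map_pow, FiniteField.pow_card]
  -- the curve is fixed by σ
  have hmap : WeierstrassCurve.map W σ = W := by
    refine WC_ext ?_ ?_ ?_ ?_ ?_ <;>
      simp only [WeierstrassCurve.map_a₁, WeierstrassCurve.map_a₂, WeierstrassCurve.map_a₃,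
        WeierstrassCurve.map_a₄, WeierstrassCurve.map_a₆, hσ]
    exacts [hW.1, hW.2.1, hW.2.2.1, hW.2.2.2.1, hW.2.2.2.2]
  -- φ agrees with the coordinatewise σ-map, hence is additive
  set ψ : W.Point →+ W.Point := Aux.sHom σ hmap with hψdef
  have hφψ : ∀ P : W.Point, φ P = ψ P := by
    intro P
    cases P with
    | zero =>
      have h0 : φ 0 = 0 := (hφ 0).2.2.mpr rfl
      rw [← WeierstrassCurve.Affine.Point.zero_def, h0]; rfl
    | @some x0 y0 h =>
      have hnz : φ (WeierstrassCurve.Affine.Point.some _ _ h) ≠ 0 := fun hz =>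
        WeierstrassCurve.Affine.Point.some_ne_zero h ((hφ _).2.2.mp hz)
      obtain ⟨hn', heq⟩ := Aux.eq_some _ hnz
      rw [heq]
      show _ = Aux.sPt σ hmap (WeierstrassCurve.Affine.Point.some _ _ h)
      rw [Aux.sPt_some]
      refine Aux.some_congr ?_ ?_
      · rw [(hφ (WeierstrassCurve.Affine.Point.some _ _ h)).1, hσ]; rfl
      · rw [(hφ (WeierstrassCurve.Affine.Point.some _ _ h)).2.1, hσ]; rfl
  have hψt : ψ t = t := by rw [← hφψ t, htK]
  have hψb : ψ b = b + t := by rw [← hφψ b, hb]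
  -- group-theoretic facts
  have htd : d • t = 0 := by rw [← ht]; exact addOrderOf_nsmul_eq_zero t
  have hmt0 : ∀ m : ℕ, 0 < m → m < d → m • t ≠ 0 := by
    intro m h1 h2 he
    have := addOrderOf_dvd_iff_nsmul_eq_zero.mpr he
    rw [ht] at this
    have := Nat.le_of_dvd h1 this
    omega
  have htorp : ∀ v : ℕ, d • (v • t) = 0 := fun v => by
    rw [smul_comm, htd, smul_zero]
  have htorn : ∀ v : ℕ, d • (-(v • t)) = 0 := fun v => by
    rw [smul_neg, htorp, neg_zero]
  have hkey : ∀ (u : ℕ) (Q : W.Point), d • Q = 0 → b + u • t ≠ Q := by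
    intro u Q hQ he
    apply hbd
    have h1 : d • (b + u • t) = d • Q := congrArg (d • ·) he
    rw [hQ, smul_add, smul_comm d u t, htd, smul_zero, add_zero] at h1
    exact h1
  have hb0t : ∀ u : ℕ, b + u • t ≠ 0 := fun u => hkey u 0 (smul_zero d)
  have hbne : b ≠ 0 := by
    have := hb0t 0
    simpa using this
  have htinj : ∀ i j : ℕ, i < d → j < d → i • t = j • t → i = j := by
    have key : ∀ i j : ℕ, i ≤ j → j < d → i • t = j • t → i = j := by
      intro i j hij hjd he
      have h1 : j • t = i • t + (j - i) • t := by
        rw [← add_nsmul]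
        congr 1
        omega
      rw [← he, left_eq_add] at h1
      have := addOrderOf_dvd_iff_nsmul_eq_zero.mpr h1
      rw [ht] at this
      rcases Nat.eq_zero_of_dvd_of_lt this (by omega) with h0
      omega
    intro i j hid hjd he
    rcases le_total i j with h | h
    · exact key i j h hjd he
    · exact (key j i h hid he.symm).symm
  -- coordinates of the torsion points
  set xk : ℕ → L := fun k => xc (-(k • t)) with hxkdef
  set yk : ℕ → L := fun k => yc (-(k • t)) with hykdef
  have hkt0 : ∀ m ∈ Finset.Ioo 0 d, -((m : ℕ) • t) ≠ (0 : W.Point) := by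
    intro m hm
    obtain ⟨h1, h2⟩ := Finset.mem_Ioo.mp hm
    simpa [neg_eq_zero] using hmt0 m h1 h2
  -- the pairing structure on x-coordinates
  have hptneg : ∀ k m : ℕ, m + k = d → -((m : ℕ) • t) = ((k : ℕ) • t : W.Point) := by
    intro k m hmk
    have : m • t + k • t = (0 : W.Point) := by rw [← add_nsmul, hmk, htd]
    rw [neg_eq_iff_add_eq_zero]
    exact this
  have hxpair : ∀ k ∈ Finset.Ioo 0 d, ∀ m ∈ Finset.Ioo 0 d,
      (xk k = xk m ↔ m = k ∨ m + k = d) := by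
    intro k hk m hm
    obtain ⟨hk1, hk2⟩ := Finset.mem_Ioo.mp hk
    obtain ⟨hm1, hm2⟩ := Finset.mem_Ioo.mp hm
    constructor
    · intro he
      rcases Aux.eq_or_eq_neg_of_xc_eq (hkt0 k hk) (hkt0 m hm) he with h | h
      · left
        exact htinj m k hm2 hk2 (neg_injective h).symm
      · right
        rw [neg_neg] at h
        have hsum : (m + k) • t = (0 : W.Point) := by
          rw [add_nsmul, ← h, neg_add_cancel]
        have hdvd := addOrderOf_dvd_iff_nsmul_eq_zero.mpr hsum
        rw [ht] at hdvd
        have h1 := Nat.le_of_dvd (by omega) hdvd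
        have h2 : d ∣ m + k - d := Nat.dvd_sub hdvd dvd_rfl
        have h3 := Nat.eq_zero_of_dvd_of_lt h2 (by omega)
        omega
    · intro h
      rcases h with rfl | h
      · rfl
      · rw [hxkdef]
        show xc (-(k • t)) = xc (-(m • t))
        rw [congrArg xc (hptneg k m h), ← Aux.xc_neg (k • t)]
  have hypair : ∀ k ∈ Finset.Ioo 0 d, ∀ m ∈ Finset.Ioo 0 d, m ≠ k → m + k = d →
      yk k ≠ yk m := by
    intro k hk m hm hmk hsum he
    obtain ⟨hk1, hk2⟩ := Finset.mem_Ioo.mp hk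
    obtain ⟨hm1, hm2⟩ := Finset.mem_Ioo.mp hm
    have hxe : xk k = xk m := (hxpair k hk m hm).mpr (Or.inr hsum)
    obtain ⟨hnk, hek⟩ := Aux.eq_some _ (hkt0 k hk)
    obtain ⟨hnm, hem⟩ := Aux.eq_some _ (hkt0 m hm)
    have : -((k:ℕ) • t) = -((m:ℕ) • t : W.Point) := by
      rw [hek, hem]
      exact Aux.some_congr hxe he
    exact hmk (htinj m k hm2 hk2 (neg_injective this).symm)
  -- σ fixes the coordinates of torsion points
  have hψkt : ∀ k : ℕ, ψ (-((k:ℕ) • t)) = -((k:ℕ) • t) := fun k => by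
    rw [map_neg, map_nsmul, hψt]
  have hσxk : ∀ k : ℕ, σ (xk k) = xk k := by
    intro k
    have h1 := (hφ (-((k:ℕ) • t))).1
    rw [hφψ, hψkt k] at h1
    rw [hσ, hxkdef]
    exact h1.symm
  have hσyk : ∀ k : ℕ, σ (yk k) = yk k := by
    intro k
    have h1 := (hφ (-((k:ℕ) • t))).2.1
    rw [hφψ, hψkt k] at h1
    rw [hσ, hykdef]
    exact h1.symm
  -- the Frobenius orbit of b
  have hφorbit : ∀ j : ℕ, φ (b + j • t) = b + (j + 1) • t := by
    intro j
    rw [hφψ, map_add, hψb, map_nsmul, hψt, succ_nsmul]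
    abel
  set ξ : ℕ → L := fun j => xc (b + j • t) with hξdef
  set η : ℕ → L := fun j => yc (b + j • t) with hηdef
  have hσξ : ∀ j : ℕ, σ (ξ j) = ξ (j + 1) := by
    intro j
    have h1 := (hφ (b + j • t)).1
    rw [hφorbit j] at h1
    rw [hσ, hξdef]
    exact h1.symm
  have hση : ∀ j : ℕ, σ (η j) = η (j + 1) := by
    intro j
    have h1 := (hφ (b + j • t)).2.1
    rw [hφorbit j] at h1
    rw [hσ, hηdef]
    exact h1.symm
  -- denominators do not vanish
  have hden : ∀ (j : ℕ), ∀ m ∈ Finset.Ioo 0 d, ξ j ≠ xk m := by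
    intro j m hm he
    rcases Aux.eq_or_eq_neg_of_xc_eq (hb0t j) (hkt0 m hm) he with h | h
    · exact hkey j _ (htorn m) h
    · rw [neg_neg] at h
      exact hkey j _ (htorp m) h
  -- linear independence
  have hli : LinearIndependent K ω := by
    rw [Fintype.linearIndependent_iff]
    intro g hg
    set c : ℕ → L := fun k => if h : k < d then algebraMap K L (g ⟨k, h⟩) else 0 with hcdef
    have hσc : ∀ k, σ (c k) = c k := by
      intro k
      rw [hcdef]
      by_cases h : k < d
      · simp only [dif_pos h]
        exact hσalg _
      · simp only [dif_neg h, map_zero]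
    -- the function values
    have hb00 : b + (0 : ℕ) • t = b := by rw [zero_smul, add_zero]
    have hξ0 : ξ 0 = xc b := congrArg xc hb00
    have hη0 : η 0 = yc b := congrArg yc hb00
    have huf : ∀ m : ℕ, 0 < m → m < d → uf W 0 (m • t) b = (η 0 - yk m) / (ξ 0 - xk m) := by
      intro m h1 h2
      rw [uf, sub_zero, zero_sub]
      rw [WeierstrassCurve.Affine.slope_of_X_ne
        (by
          intro he
          exact hden 0 m (Finset.mem_Ioo.mpr ⟨h1, h2⟩) (by rw [hξ0]; exact he))]
      rw [hξ0, hη0]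
    set val : ℕ → L := fun j => ∑ k ∈ Finset.range d, c k *
      (if k = 0 then 1 else (η j - yk k) / (ξ j - xk k)) with hvaldef
    have hval0 : val 0 = 0 := by
      have hv0 : val 0 = ∑ k ∈ Finset.range d, c k *
          (if k = 0 then 1 else (η 0 - yk k) / (ξ 0 - xk k)) := rfl
      rw [hv0, ← hg, ← Fin.sum_univ_eq_sum_range (fun k => c k *
        (if k = 0 then 1 else (η 0 - yk k) / (ξ 0 - xk k))) d]
      refine Finset.sum_congr rfl fun i _ => ?_
      rw [hω i, Algebra.smul_def]
      have hci : c (i : ℕ) = algebraMap K L (g i) := by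
        rw [hcdef]
        simp only [dif_pos i.isLt, Fin.eta]
      rw [hci]
      by_cases hi : (i : ℕ) = 0
      · simp [hi]
      · rw [if_neg hi, if_neg hi]
        have h1 : 0 < (i : ℕ) := Nat.pos_of_ne_zero hi
        rw [huf (i : ℕ) h1 i.isLt]
    have hvalstep : ∀ j : ℕ, val (j + 1) = σ (val j) := by
      intro j
      rw [hvaldef, map_sum]
      refine Finset.sum_congr rfl fun k _ => ?_
      rw [map_mul, hσc k]
      congr 1
      by_cases hk : k = 0
      · simp [hk]
      · rw [if_neg hk, if_neg hk, map_div₀, map_sub, map_sub, hσξ, hση, hσxk, hσyk]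
    have hvalz : ∀ j : ℕ, val j = 0 := by
      intro j
      induction j with
      | zero => exact hval0
      | succ j ih => rw [hvalstep j, ih, map_zero]
    -- the interpolation polynomials
    set D : Polynomial L := ∏ j ∈ Finset.Ioo 0 d, (Polynomial.X - Polynomial.C (xk j)) with hDdef
    set Dk : ℕ → Polynomial L := fun k => ∏ j ∈ (Finset.Ioo 0 d).erase k,
      (Polynomial.X - Polynomial.C (xk j)) with hDkdef
    set A : Polynomial L := Polynomial.C (c 0) * D -
      ∑ k ∈ Finset.Ioo 0 d, Polynomial.C (c k * yk k) * Dk k with hAdef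
    set B : Polynomial L := ∑ k ∈ Finset.Ioo 0 d, Polynomial.C (c k) * Dk k with hBdef
    -- degree bounds
    have hcardIoo : (Finset.Ioo 0 d).card = d - 1 := by rw [Nat.card_Ioo]; omega
    have hDkdeg : ∀ k ∈ Finset.Ioo 0 d, (Dk k).natDegree ≤ d - 2 := by
      intro k hk
      have h1 := Polynomial.natDegree_prod_le ((Finset.Ioo 0 d).erase k)
        (fun j => Polynomial.X - Polynomial.C (xk j))
      have h3 : ∑ j ∈ (Finset.Ioo 0 d).erase k,
          (Polynomial.X - Polynomial.C (xk j)).natDegree ≤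
          ∑ j ∈ (Finset.Ioo 0 d).erase k, 1 :=
        Finset.sum_le_sum fun j _ => le_of_eq (Polynomial.natDegree_X_sub_C (xk j))
      have h4 : ∑ j ∈ (Finset.Ioo 0 d).erase k, 1 = d - 2 := by
        rw [Finset.sum_const, smul_eq_mul, mul_one, Finset.card_erase_of_mem hk, hcardIoo]
        omega
      exact le_trans h1 (le_trans h3 (le_of_eq h4))
    have hDdeg : D.natDegree ≤ d - 1 := by
      have h1 := Polynomial.natDegree_prod_le (Finset.Ioo 0 d)
        (fun j => Polynomial.X - Polynomial.C (xk j))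
      have h3 : ∑ j ∈ Finset.Ioo 0 d,
          (Polynomial.X - Polynomial.C (xk j)).natDegree ≤ ∑ j ∈ Finset.Ioo 0 d, 1 :=
        Finset.sum_le_sum fun j _ => le_of_eq (Polynomial.natDegree_X_sub_C (xk j))
      have h4 : ∑ j ∈ Finset.Ioo 0 d, 1 = d - 1 := by
        rw [Finset.sum_const, smul_eq_mul, mul_one, hcardIoo]
      exact le_trans h1 (le_trans h3 (le_of_eq h4))
    have hBdeg : B.natDegree ≤ d - 2 := by
      rw [hBdef]
      refine Polynomial.natDegree_sum_le_of_forall_le _ _ fun k hk => ?_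
      exact le_trans (Polynomial.natDegree_C_mul_le _ _) (hDkdeg k hk)
    have hAdeg : A.natDegree ≤ d - 1 := by
      rw [hAdef]
      refine le_trans (Polynomial.natDegree_sub_le _ _) ?_
      rw [max_le_iff]
      constructor
      · exact le_trans (Polynomial.natDegree_C_mul_le _ _) hDdeg
      · refine le_trans (Polynomial.natDegree_sum_le_of_forall_le _ _ fun k hk =>
          le_trans (Polynomial.natDegree_C_mul_le _ _) (hDkdeg k hk)) (by omega)
    -- the point family
    set P : (Fin d ⊕ Fin (d - 1)) → W.Point :=
      Sum.elim (fun j => b + (j : ℕ) • t) (fun k => -(((k : ℕ) + 1) • t)) with hPdef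
    have hcardι : Fintype.card (Fin d ⊕ Fin (d - 1)) = d + (d - 1) := by simp
    have hmemIoo : ∀ k : Fin (d - 1), ((k : ℕ) + 1) ∈ Finset.Ioo 0 d := by
      intro k
      have := k.isLt
      exact Finset.mem_Ioo.mpr ⟨Nat.succ_pos _, by omega⟩
    have hP0 : ∀ i, P i ≠ 0 := by
      rintro (j | k)
      · exact hb0t (j : ℕ)
      · exact hkt0 _ (hmemIoo k)
    have hPinj : Function.Injective P := by
      rintro (i | i) (j | j) he
      · have h1 : (i : ℕ) • t = (j : ℕ) • t := by
          have := he
          simp only [hPdef, Sum.elim_inl] at this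
          exact add_left_cancel this
        have := htinj i j i.isLt j.isLt h1
        exact congrArg Sum.inl (Fin.ext this)
      · exact absurd he (hkey (i : ℕ) _ (htorn _))
      · exact absurd he.symm (hkey (j : ℕ) _ (htorn _))
      · have h1 : ((i : ℕ) + 1) • t = ((j : ℕ) + 1) • t := by
          have := he
          simp only [hPdef, Sum.elim_inr] at this
          exact neg_injective this
        have hi := i.isLt
        have hj := j.isLt
        have := htinj ((i : ℕ) + 1) ((j : ℕ) + 1) (by omega) (by omega) h1
        exact congrArg Sum.inr (Fin.ext (by omega))
    -- vanishing of A + B y at all the points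
    have hvan : ∀ i, A.eval (xc (P i)) + B.eval (xc (P i)) * yc (P i) = 0 := by
      rintro (j | k)
      · -- at b + j t
        have hxPj : xc (P (Sum.inl j)) = ξ (j : ℕ) := rfl
        have hyPj : yc (P (Sum.inl j)) = η (j : ℕ) := rfl
        rw [hxPj, hyPj]
        set Dv : L := ∏ m ∈ Finset.Ioo 0 d, (ξ (j : ℕ) - xk m) with hDvdef
        set Dkv : ℕ → L := fun k => ∏ m ∈ (Finset.Ioo 0 d).erase k, (ξ (j : ℕ) - xk m)
          with hDkvdef
        have hevA : A.eval (ξ (j : ℕ)) = c 0 * Dv -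
            ∑ m ∈ Finset.Ioo 0 d, (c m * yk m) * Dkv m := by
          rw [hAdef, hDdef, hDkdef, hDvdef, hDkvdef]
          simp [Polynomial.eval_prod, Polynomial.eval_finset_sum]
        have hevB : B.eval (ξ (j : ℕ)) = ∑ m ∈ Finset.Ioo 0 d, (c m) * Dkv m := by
          rw [hBdef, hDkdef, hDkvdef]
          simp [Polynomial.eval_prod, Polynomial.eval_finset_sum]
        have hfac : ∀ m ∈ Finset.Ioo 0 d, Dv = (ξ (j : ℕ) - xk m) * Dkv m := fun m hm =>
          (Finset.mul_prod_erase _ _ hm).symm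
        have hterm : ∀ m ∈ Finset.Ioo 0 d,
            c m * (η (j : ℕ) - yk m) * Dkv m =
              (c m * ((η (j : ℕ) - yk m) / (ξ (j : ℕ) - xk m))) * Dv := by
          intro m hm
          rw [hfac m hm]
          have hne : ξ (j : ℕ) - xk m ≠ 0 := sub_ne_zero_of_ne (hden (j : ℕ) m hm)
          field_simp
        have hsumval : c 0 + ∑ m ∈ Finset.Ioo 0 d,
            c m * ((η (j : ℕ) - yk m) / (ξ (j : ℕ) - xk m)) = 0 := by
          have hv : ∑ k ∈ Finset.range d, c k *
              (if k = 0 then 1 else (η (j : ℕ) - yk k) / (ξ (j : ℕ) - xk k)) = 0 := hvalz (j : ℕ)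
          rw [Finset.range_eq_Ico, ← Finset.Ioo_insert_left (by omega : 0 < d),
            Finset.sum_insert (by simp)] at hv
          rw [← hv]
          congr 1
          · simp
          · refine Finset.sum_congr rfl fun m hm => ?_
            obtain ⟨h1, _⟩ := Finset.mem_Ioo.mp hm
            rw [if_neg (by omega)]
        have hcomb : ∑ m ∈ Finset.Ioo 0 d, c m * (η (j : ℕ) - yk m) * Dkv m =
            (∑ m ∈ Finset.Ioo 0 d, c m * ((η (j : ℕ) - yk m) / (ξ (j : ℕ) - xk m))) * Dv := by
          rw [Finset.sum_mul]
          exact Finset.sum_congr rfl hterm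
        have hexp : ∑ m ∈ Finset.Ioo 0 d, c m * (η (j : ℕ) - yk m) * Dkv m =
            (∑ m ∈ Finset.Ioo 0 d, (c m) * Dkv m) * η (j : ℕ) -
              ∑ m ∈ Finset.Ioo 0 d, (c m * yk m) * Dkv m := by
          rw [Finset.sum_mul, ← Finset.sum_sub_distrib]
          exact Finset.sum_congr rfl fun m _ => by ring
        rw [hevA, hevB]
        calc c 0 * Dv - ∑ m ∈ Finset.Ioo 0 d, (c m * yk m) * Dkv m +
              (∑ m ∈ Finset.Ioo 0 d, (c m) * Dkv m) * η (j : ℕ)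
            = c 0 * Dv + ∑ m ∈ Finset.Ioo 0 d, c m * (η (j : ℕ) - yk m) * Dkv m := by
              rw [hexp]; ring
          _ = c 0 * Dv + (∑ m ∈ Finset.Ioo 0 d,
                c m * ((η (j : ℕ) - yk m) / (ξ (j : ℕ) - xk m))) * Dv := by rw [hcomb]
          _ = (c 0 + ∑ m ∈ Finset.Ioo 0 d,
                c m * ((η (j : ℕ) - yk m) / (ξ (j : ℕ) - xk m))) * Dv := by ring
          _ = 0 := by rw [hsumval, zero_mul]
      · -- at -(m t)
        set m : ℕ := (k : ℕ) + 1 with hmdef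
        have hm : m ∈ Finset.Ioo 0 d := hmemIoo k
        have hxPk : xc (P (Sum.inr k)) = xk m := rfl
        have hyPk : yc (P (Sum.inr k)) = yk m := rfl
        rw [hxPk, hyPk]
        have hDv0 : D.eval (xk m) = 0 := by
          rw [hDdef, Polynomial.eval_prod]
          exact Finset.prod_eq_zero hm (by simp)
        have hDkv0 : ∀ k' ∈ Finset.Ioo 0 d, k' ≠ m → (Dk k').eval (xk m) = 0 := by
          intro k' hk' hne
          rw [hDkdef, Polynomial.eval_prod]
          exact Finset.prod_eq_zero (Finset.mem_erase.mpr ⟨Ne.symm hne, hm⟩) (by simp)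
        have hevA : A.eval (xk m) = - ((c m * yk m) * (Dk m).eval (xk m)) := by
          rw [hAdef]
          simp only [Polynomial.eval_sub, Polynomial.eval_mul, Polynomial.eval_C,
            Polynomial.eval_finset_sum]
          rw [hDv0, mul_zero, zero_sub]
          congr 1
          rw [Finset.sum_eq_single_of_mem m hm (fun k' hk' hne => ?_)]
          rw [hDkv0 k' hk' hne, mul_zero]
        have hevB : B.eval (xk m) = c m * (Dk m).eval (xk m) := by
          rw [hBdef]
          simp only [Polynomial.eval_finset_sum, Polynomial.eval_mul, Polynomial.eval_C]
          rw [Finset.sum_eq_single_of_mem m hm (fun k' hk' hne => ?_)]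
          rw [hDkv0 k' hk' hne, mul_zero]
        rw [hevA, hevB]
        ring
    -- conclude A = 0 and B = 0
    have hABzero : A = 0 ∧ B = 0 := by
      by_contra hAB
      have hG : A • (1 : W.CoordinateRing) + B • WeierstrassCurve.Affine.CoordinateRing.mk W
          (Polynomial.X : (Polynomial (Polynomial L))) ≠ 0 := fun h => hAB
        (WeierstrassCurve.Affine.CoordinateRing.smul_basis_eq_zero h)
      have hAd : 2 * A.natDegree ≤ Fintype.card (Fin d ⊕ Fin (d - 1)) := by
        rw [hcardι]; omega
      have hBd : B = 0 ∨ 2 * B.natDegree + 3 ≤ Fintype.card (Fin d ⊕ Fin (d - 1)) := by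
        right; rw [hcardι]; omega
      have hsum := Divisor.sum_eq_zero_of_vanishing P hP0 hPinj A B hAd hBd hG hvan
      -- compute the sum of the points
      have hsum2 : ∑ i, P i = d • b := by
        rw [Fintype.sum_sum_type]
        have h1 : ∑ j : Fin d, P (Sum.inl j) = d • b + (∑ j : Fin d, (j : ℕ)) • t := by
          simp only [hPdef, Sum.elim_inl]
          rw [Finset.sum_add_distrib, Finset.sum_const, Finset.card_univ, Fintype.card_fin,
            ← Finset.sum_smul]
        have h2 : ∑ k : Fin (d - 1), P (Sum.inr k) = -((∑ k : Fin (d - 1), ((k : ℕ) + 1)) • t) := by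
          simp only [hPdef, Sum.elim_inr]
          rw [Finset.sum_smul]
          rw [Finset.sum_neg_distrib]
        have h3 : ∑ j : Fin d, (j : ℕ) = ∑ k : Fin (d - 1), ((k : ℕ) + 1) := by
          rw [Fin.sum_univ_eq_sum_range (fun i => i) d, Fin.sum_univ_eq_sum_range (fun i => i + 1)
            (d - 1)]
          have hd1 : d = (d - 1) + 1 := by omega
          rw [hd1, Finset.sum_range_succ']
          simp
        rw [h1, h2, h3]
        abel
      rw [hsum2] at hsum
      exact hbd hsum
    -- extract the coefficients
    have hczero : ∀ k, k < d → c k = 0 := by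
      refine Extraction.extraction d hd xk yk c hxpair hypair ?_ ?_
      · have hBz : ∑ k ∈ Finset.Ioo 0 d, Polynomial.C (c k) *
            ∏ j ∈ (Finset.Ioo 0 d).erase k, (Polynomial.X - Polynomial.C (xk j)) = B := by
          simp only [hBdef, hDkdef]
        rw [hBz]
        exact hABzero.2
      · have hAz : Polynomial.C (c 0) * ∏ j ∈ Finset.Ioo 0 d, (Polynomial.X - Polynomial.C (xk j))
            - ∑ k ∈ Finset.Ioo 0 d, Polynomial.C (c k * yk k) *
              ∏ j ∈ (Finset.Ioo 0 d).erase k, (Polynomial.X - Polynomial.C (xk j)) = A := by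
          simp only [hAdef, hDkdef, hDdef]
        rw [hAz]
        exact hABzero.1
    intro i
    have hci : c (i : ℕ) = algebraMap K L (g i) := by
      rw [hcdef]
      simp only [dif_pos i.isLt, Fin.eta]
    have := hczero (i : ℕ) i.isLt
    rw [hci] at this
    exact (algebraMap K L).injective (by rw [this, map_zero])
  refine ⟨hli, ?_⟩
  haveI : Nonempty (Fin d) := ⟨⟨0, by omega⟩⟩
  exact hli.span_eq_top_of_card_eq_finrank (by rw [Fintype.card_fin, hrank])

end EllipticPeriods
end
end

section
/- In the setting of an elliptic basis, for any nonzero k ∈ ℤ/dℤ, one has ω_k² = ξ₀ - a₁·ω_k + ξ_k + ν_k + a₂, where ξ_k = x_{kt}(b) and ν_k = x_O(kt). -/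
noncomputable section
namespace EllipticPeriods

variable {F : Type*} [Field F]

lemma xc_neg {W : WeierstrassCurve.Affine F} (P : W.Point) : xc (-P) = xc P := by
  cases P <;> rfl

open Classical in
lemma xc_add {W : WeierstrassCurve.Affine F} (P Q : W.Point) (hP : P ≠ 0) (hQ : Q ≠ 0)
    (hPQ : P + Q ≠ 0) :
    xc (P + Q) = W.addX (xc P) (xc Q) (W.slope (xc P) (xc Q) (yc P) (yc Q)) := by
  cases P with
  | zero => exact absurd rfl hP
  | @some x₁ y₁ h₁ =>
    cases Q with
    | zero => exact absurd rfl hQ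
    | @some x₂ y₂ h₂ =>
      by_cases hxy : x₁ = x₂ → y₁ ≠ W.negY x₂ y₂
      · rw [WeierstrassCurve.Affine.Point.add_some (fun h => hxy h.1 h.2)]; rfl
      · push_neg at hxy
        exact absurd (WeierstrassCurve.Affine.Point.add_of_Y_eq hxy.1 hxy.2) hPQ

open Classical in
/-- for nonzero `k ∈ ℤ/dℤ`, `ω_k² = ξ₀ - a₁·ω_k + ξ_k + ν_k + a₂`,
where `ξ_k = x_{kt}(b) = x(b - kt)` and `ν_k = x_O(kt) = x(kt)`. -/
theorem omega_sq {K L : Type*} [Field K] [Fintype K] [Field L] [Algebra K L]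
    (d : ℕ) (hd : 2 ≤ d) (hrank : Module.finrank K L = d)
    (W : WeierstrassCurve.Affine L)
    (hW : W.a₁ ^ Fintype.card K = W.a₁ ∧ W.a₂ ^ Fintype.card K = W.a₂ ∧
      W.a₃ ^ Fintype.card K = W.a₃ ∧ W.a₄ ^ Fintype.card K = W.a₄ ∧
      W.a₆ ^ Fintype.card K = W.a₆)
    (φ : W.Point → W.Point)
    (hφ : ∀ P : W.Point, xc (φ P) = xc P ^ Fintype.card K ∧
      yc (φ P) = yc P ^ Fintype.card K ∧ (φ P = 0 ↔ P = 0))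
    (t : W.Point) (ht : addOrderOf t = d) (htK : φ t = t)
    (b : W.Point) (hb : φ b = b + t) (hbd : d • b ≠ 0)
    (ω : ZMod d → L)
    (hω : ∀ k : ZMod d, ω k = if k = 0 then 1 else uf W 0 (k.val • t) b) :
    ∀ k : ZMod d, k ≠ 0 →
      ω k ^ 2 =
        xc b - W.a₁ * ω k + xc (b - k.val • t) + xc (k.val • t) + W.a₂ := by
  intro k hk
  haveI : NeZero d := ⟨by omega⟩
  have hω' := hω k
  rw [if_neg hk] at hω'
  set m := k.val with hm
  have hm0 : m ≠ 0 := fun h => hk ((ZMod.val_eq_zero k).mp h)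
  have hmd : m < d := ZMod.val_lt k
  have hdt : d • t = 0 := by
    rw [← ht]; exact addOrderOf_nsmul_eq_zero t
  have hkt0 : m • t ≠ 0 := by
    intro h
    have := (addOrderOf_dvd_iff_nsmul_eq_zero).mpr h
    rw [ht] at this
    exact absurd (Nat.le_of_dvd (Nat.pos_of_ne_zero hm0) this) (by omega)
  have hb0 : b ≠ 0 := by
    intro h; exact hbd (by rw [h, smul_zero])
  have hbkt : b - m • t ≠ 0 := by
    intro h
    rw [sub_eq_zero] at h
    apply hbd
    rw [h, smul_comm, hdt, smul_zero]
  have key := xc_add b (-(m • t)) hb0 (neg_ne_zero.mpr hkt0)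
    (by rwa [← sub_eq_add_neg])
  rw [← sub_eq_add_neg] at key
  have hωs : ω k = W.slope (xc b) (xc (-(m • t))) (yc b) (yc (-(m • t))) := by
    rw [hω']
    simp only [uf, sub_zero, zero_sub]
  rw [xc_neg] at key
  rw [hωs, xc_neg, key]
  simp only [WeierstrassCurve.Affine.addX]
  ring

end EllipticPeriods
end
end
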